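/- Let d ≥ 2 be an integer, let G = SL₂(ℤ) × SL₂(ℤ), and let H ≤ G be the subgroup of pairs (A,B) such that A ≡ B (mod d), i.e. the images of A and B under the entrywise reduction homomorphism SL₂(ℤ) → SL₂(ℤ/dℤ) coincide. Let Z ≤ G be the subgroup generated by (−I, I) and (I, −I), and let H̄ be the image of H in the quotient group G/Z. Then the index of H̄ in G/Z equals 6 if d = 2, and, as an equality of rational numbers, equals (1/2)·d³·∑_{r ∣ d} μ(r)/r² if d > 2. -/

import Mathlib

open scoped BigOperators

/-- The entrywise reduction homomorphism `SL₂(ℤ) → SL₂(ℤ/dℤ)`. -/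
def redSL (d : ℕ) :
    Matrix.SpecialLinearGroup (Fin 2) ℤ →* Matrix.SpecialLinearGroup (Fin 2) (ZMod d) :=
  Matrix.SpecialLinearGroup.map (Int.castRingHom (ZMod d))

/-- The subgroup `H = {(A,B) ∈ SL₂(ℤ) × SL₂(ℤ) : A ≡ B (mod d)}`, i.e. the pairs whose
entrywise reductions mod `d` coincide. -/
def congSubgroup (d : ℕ) :
    Subgroup (Matrix.SpecialLinearGroup (Fin 2) ℤ × Matrix.SpecialLinearGroup (Fin 2) ℤ) :=
  MonoidHom.eqLocus ((redSL d).comp (MonoidHom.fst _ _)) ((redSL d).comp (MonoidHom.snd _ _))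

/-- The element `-I` of `SL₂(ℤ)`. -/
def negOneSL : Matrix.SpecialLinearGroup (Fin 2) ℤ :=
  ⟨-1, by norm_num [Matrix.det_neg]⟩

/-- The subgroup `Z ≤ SL₂(ℤ) × SL₂(ℤ)` generated by `(-I, I)` and `(I, -I)`. -/
def signSubgroup :
    Subgroup (Matrix.SpecialLinearGroup (Fin 2) ℤ × Matrix.SpecialLinearGroup (Fin 2) ℤ) :=
  Subgroup.closure {(negOneSL, 1), (1, negOneSL)}

lemma negOneSL_commute (A : Matrix.SpecialLinearGroup (Fin 2) ℤ) :
    A * negOneSL = negOneSL * A := by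
  apply Subtype.ext
  show (A : Matrix (Fin 2) (Fin 2) ℤ) * (-1) = (-1) * (A : Matrix (Fin 2) (Fin 2) ℤ)
  rw [mul_neg_one, neg_one_mul]

lemma signSubgroup_le_center :
    signSubgroup ≤
      Subgroup.center (Matrix.SpecialLinearGroup (Fin 2) ℤ × Matrix.SpecialLinearGroup (Fin 2) ℤ) := by
  rw [signSubgroup, Subgroup.closure_le]
  rintro x (rfl | rfl) <;>
  · rw [SetLike.mem_coe, Subgroup.mem_center_iff]
    rintro ⟨g1, g2⟩
    refine Prod.ext ?_ ?_ <;>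
      simp [Prod.mk_mul_mk, negOneSL_commute]

instance signSubgroup_normal : signSubgroup.Normal := by
  constructor
  intro n hn g
  have h := (Subgroup.mem_center_iff.mp (signSubgroup_le_center hn)) g
  rw [h, mul_inv_cancel_right]
  exact hn


open Matrix Finset ArithmeticFunction

abbrev SL2 (R : Type*) [CommRing R] := Matrix.SpecialLinearGroup (Fin 2) R

lemma redSL_coe (d : ℕ) (A : Matrix.SpecialLinearGroup (Fin 2) ℤ) (i j : Fin 2) :
    ((redSL d A) : Matrix (Fin 2) (Fin 2) (ZMod d)) i j = ((A.1 i j : ℤ) : ZMod d) := by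
  simp [redSL, Matrix.SpecialLinearGroup.map_apply_coe, RingHom.mapMatrix_apply, Matrix.map_apply]

def Tmat {R : Type*} [CommRing R] (t : R) : SL2 R :=
  ⟨!![1, t; 0, 1], by simp [Matrix.det_fin_two_of]⟩

lemma eq_Tmat_of_row {R : Type*} [CommRing R] (N : SL2 R) (h0 : N.1 1 0 = 0)
    (h1 : N.1 1 1 = 1) : N = Tmat (N.1 0 1) := by
  have hd := N.2
  rw [Matrix.det_fin_two, h0, h1] at hd
  apply Subtype.ext
  ext i j
  fin_cases i <;> fin_cases j <;>
    simp_all [Tmat]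

lemma bottom_row_mul_inv {R : Type*} [CommRing R] (M M₀ : SL2 R) (h0 : M.1 1 0 = M₀.1 1 0)
    (h1 : M.1 1 1 = M₀.1 1 1) :
    (M * M₀⁻¹).1 1 0 = 0 ∧ (M * M₀⁻¹).1 1 1 = 1 := by
  have hdet := M₀.2
  rw [Matrix.det_fin_two] at hdet
  rw [Matrix.SpecialLinearGroup.SL2_inv_expl M₀]
  show (M.1 * _ : Matrix (Fin 2) (Fin 2) R) 1 0 = 0 ∧ (M.1 * _ : Matrix (Fin 2) (Fin 2) R) 1 1 = 1
  constructor <;>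
  · rw [Matrix.mul_apply, Fin.sum_univ_two]
    simp [h0, h1]
    ring_nf
    try linear_combination hdet

section Counting
variable (n : ℕ) [NeZero n]

lemma uni_iff (c d : ZMod n) :
    Nat.gcd (Nat.gcd c.val d.val) n = 1 ↔ ∃ x y : ZMod n, x * d - y * c = 1 := by
  constructor
  · intro h
    have h1 : ((Nat.gcd (Nat.gcd c.val d.val) n : ℕ) : ℤ) =
        (Nat.gcd c.val d.val : ℤ) * Nat.gcdA (Nat.gcd c.val d.val) n
          + n * Nat.gcdB (Nat.gcd c.val d.val) n := Nat.gcd_eq_gcd_ab _ _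
    have h2 : ((Nat.gcd c.val d.val : ℕ) : ℤ) =
        c.val * Nat.gcdA c.val d.val + d.val * Nat.gcdB c.val d.val := Nat.gcd_eq_gcd_ab _ _
    rw [h] at h1
    have h1' := congrArg (Int.cast : ℤ → ZMod n) h1
    have h2' := congrArg (Int.cast : ℤ → ZMod n) h2
    push_cast [ZMod.natCast_val, ZMod.cast_id, ZMod.natCast_self] at h1' h2'
    refine ⟨((Nat.gcdB c.val d.val * Nat.gcdA (Nat.gcd c.val d.val) n : ℤ) : ZMod n),
        (-(Nat.gcdA c.val d.val * Nat.gcdA (Nat.gcd c.val d.val) n : ℤ) : ZMod n), ?_⟩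
    push_cast [ZMod.natCast_val, ZMod.cast_id]
    rw [h2'] at h1'
    linear_combination -h1'
  · rintro ⟨x, y, hxy⟩
    set g := Nat.gcd (Nat.gcd c.val d.val) n with hg
    have hgc : (g : ℤ) ∣ c.val :=
      Int.natCast_dvd_natCast.2 ((Nat.gcd_dvd_left _ _).trans (Nat.gcd_dvd_left _ _))
    have hgd : (g : ℤ) ∣ d.val :=
      Int.natCast_dvd_natCast.2 ((Nat.gcd_dvd_left _ _).trans (Nat.gcd_dvd_right _ _))
    have hgn : (g : ℤ) ∣ n := Int.natCast_dvd_natCast.2 (Nat.gcd_dvd_right _ _)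
    have hlift : (((x.val : ℤ) * d.val - y.val * c.val - 1 : ℤ) : ZMod n) = 0 := by
      push_cast [ZMod.natCast_val, ZMod.cast_id]
      linear_combination hxy
    rw [ZMod.intCast_zmod_eq_zero_iff_dvd] at hlift
    have h3 := hgn.trans hlift
    have h2 : (g:ℤ) ∣ (x.val : ℤ) * d.val - y.val * c.val :=
      dvd_sub (Dvd.dvd.mul_left hgd _) (Dvd.dvd.mul_left hgc _)
    have h1 : (g : ℤ) ∣ 1 := by
      have := h2.sub h3
      simpa using this
    have := Int.eq_one_of_dvd_one (by positivity) h1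
    exact_mod_cast this

def uniSet : Finset (ZMod n × ZMod n) :=
  univ.filter fun p => Nat.gcd (Nat.gcd p.1.val p.2.val) n = 1

lemma row_mem_uniSet (M : SL2 (ZMod n)) : (M.1 1 0, M.1 1 1) ∈ uniSet n := by
  have hd := M.2
  rw [Matrix.det_fin_two] at hd
  simp only [uniSet, mem_filter, mem_univ, true_and]
  exact (uni_iff n _ _).2 ⟨M.1 0 0, M.1 0 1, by linear_combination hd⟩

lemma exists_completion {p : ZMod n × ZMod n} (hp : p ∈ uniSet n) :
    ∃ M₀ : SL2 (ZMod n), M₀.1 1 0 = p.1 ∧ M₀.1 1 1 = p.2 := by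
  simp only [uniSet, mem_filter, mem_univ, true_and] at hp
  obtain ⟨x, y, hxy⟩ := (uni_iff n _ _).1 hp
  exact ⟨⟨!![x, y; p.1, p.2], by simp [Matrix.det_fin_two_of]; linear_combination hxy⟩,
    by simp, by simp⟩

lemma fiber_card (M₀ : SL2 (ZMod n)) :
    (univ.filter fun M : SL2 (ZMod n) =>
      (M.1 1 0, M.1 1 1) = (M₀.1 1 0, M₀.1 1 1)).card = n := by
  conv_rhs => rw [← ZMod.card n, ← Finset.card_univ]
  apply Finset.card_bij' (fun M _ => (M * M₀⁻¹).1 0 1) (fun t _ => Tmat t * M₀)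
  · intro M hM
    exact mem_univ _
  · intro t _
    simp only [mem_filter, mem_univ, true_and, Prod.mk.injEq]
    constructor <;>
    · show ((Tmat t).1 * M₀.1) _ _ = _
      rw [Matrix.mul_apply, Fin.sum_univ_two]
      simp [Tmat]
  · intro M hM
    simp only [mem_filter, mem_univ, true_and, Prod.mk.injEq] at hM
    obtain ⟨h0, h1⟩ := bottom_row_mul_inv M M₀ hM.1 hM.2
    have := eq_Tmat_of_row _ h0 h1
    calc Tmat ((M * M₀⁻¹).1 0 1) * M₀ = (M * M₀⁻¹) * M₀ := by rw [← this]
    _ = M := by group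
  · intro t _
    have : (Tmat t * M₀ * M₀⁻¹) = Tmat t := by group
    rw [this]
    simp [Tmat]

lemma card_SL2_eq : Nat.card (SL2 (ZMod n)) = n * (uniSet n).card := by
  rw [Nat.card_eq_fintype_card, ← Finset.card_univ]
  rw [Finset.card_eq_sum_card_fiberwise
    (f := fun M : SL2 (ZMod n) => (M.1 1 0, M.1 1 1)) (t := uniSet n)
    (fun M _ => row_mem_uniSet n M)]
  rw [Finset.sum_congr rfl (fun p hp => ?_), Finset.sum_const, smul_eq_mul, mul_comm]
  obtain ⟨M₀, h0, h1⟩ := exists_completion n hp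
  calc (univ.filter fun M : SL2 (ZMod n) => (M.1 1 0, M.1 1 1) = p).card
      = (univ.filter fun M : SL2 (ZMod n) =>
        (M.1 1 0, M.1 1 1) = (M₀.1 1 0, M₀.1 1 1)).card := by rw [h0, h1]
    _ = n := fiber_card n M₀

lemma sum_moebius_divisors (m : ℕ) :
    ∑ r ∈ m.divisors, (moebius r : ℤ) = if m = 1 then 1 else 0 := by
  have h1 : (moebius * (zeta : ArithmeticFunction ℤ)) m = (1 : ArithmeticFunction ℤ) m := by
    rw [moebius_mul_coe_zeta]
  rwa [coe_mul_zeta_apply, ArithmeticFunction.one_apply] at h1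

lemma card_dvd_val (r : ℕ) (hr : r ∈ n.divisors) :
    (univ.filter fun x : ZMod n => r ∣ x.val).card = n / r := by
  obtain ⟨hrn, hn0⟩ := Nat.mem_divisors.1 hr
  have hr0 : 0 < r := Nat.pos_of_dvd_of_pos hrn (Nat.pos_of_ne_zero hn0)
  conv_rhs => rw [← Finset.card_range (n / r)]
  apply Finset.card_bij' (fun x _ => x.val / r) (fun k _ => ((r * k : ℕ) : ZMod n))
  · intro x hx
    simp only [mem_filter, mem_univ, true_and] at hx
    exact Finset.mem_range.2 (Nat.div_lt_div_of_lt_of_dvd hrn x.val_lt)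
  · intro k hk
    have hk' : r * k < n := by
      rw [Finset.mem_range] at hk
      calc r * k < r * (n / r) := (Nat.mul_lt_mul_left hr0).2 hk
      _ = n := Nat.mul_div_cancel' hrn
    simp only [mem_filter, mem_univ, true_and]
    rw [ZMod.val_cast_of_lt hk']
    exact Dvd.intro k rfl
  · intro x hx
    simp only [mem_filter, mem_univ, true_and] at hx
    rw [Nat.mul_div_cancel' hx]
    exact ZMod.natCast_rightInverse x
  · intro k hk
    have hk' : r * k < n := by
      rw [Finset.mem_range] at hk
      calc r * k < r * (n / r) := (Nat.mul_lt_mul_left hr0).2 hk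
      _ = n := Nat.mul_div_cancel' hrn
    rw [ZMod.val_cast_of_lt hk', Nat.mul_div_cancel_left k hr0]

lemma card_pair_dvd (r : ℕ) (hr : r ∈ n.divisors) :
    (univ.filter fun p : ZMod n × ZMod n => r ∣ p.1.val ∧ r ∣ p.2.val).card
      = (n / r) ^ 2 := by
  have : (univ.filter fun p : ZMod n × ZMod n => r ∣ p.1.val ∧ r ∣ p.2.val)
      = (univ.filter fun x : ZMod n => r ∣ x.val) ×ˢ (univ.filter fun x : ZMod n => r ∣ x.val) := by
    ext p
    simp only [mem_filter, mem_univ, true_and, Finset.mem_product]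
  rw [this, Finset.card_product, card_dvd_val n r hr, sq]

lemma card_uniSet : ((uniSet n).card : ℤ)
    = ∑ r ∈ n.divisors, (moebius r : ℤ) * ((n / r : ℕ) : ℤ) ^ 2 := by
  have hn0 : n ≠ 0 := NeZero.ne n
  rw [uniSet, Finset.card_filter]
  push_cast
  calc (∑ p : ZMod n × ZMod n, if Nat.gcd (Nat.gcd p.1.val p.2.val) n = 1 then (1:ℤ) else 0)
      = ∑ p : ZMod n × ZMod n, ∑ r ∈ (Nat.gcd (Nat.gcd p.1.val p.2.val) n).divisors,
          (moebius r : ℤ) := by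
        refine Finset.sum_congr rfl fun p _ => ?_
        rw [sum_moebius_divisors]
    _ = ∑ p : ZMod n × ZMod n, ∑ r ∈ n.divisors,
          if r ∣ Nat.gcd (Nat.gcd p.1.val p.2.val) n then (moebius r : ℤ) else 0 := by
        refine Finset.sum_congr rfl fun p _ => ?_
        rw [← Finset.sum_filter,
          Nat.divisors_filter_dvd_of_dvd hn0 (Nat.gcd_dvd_right _ n)]
    _ = ∑ r ∈ n.divisors, ∑ p : ZMod n × ZMod n,
          if r ∣ Nat.gcd (Nat.gcd p.1.val p.2.val) n then (moebius r : ℤ) else 0 :=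
        Finset.sum_comm
    _ = ∑ r ∈ n.divisors, (moebius r : ℤ) * ((n / r : ℕ) : ℤ) ^ 2 := by
        refine Finset.sum_congr rfl fun r hr => ?_
        obtain ⟨hrn, _⟩ := Nat.mem_divisors.1 hr
        have : ∀ p : ZMod n × ZMod n,
            (r ∣ Nat.gcd (Nat.gcd p.1.val p.2.val) n) ↔ (r ∣ p.1.val ∧ r ∣ p.2.val) := by
          intro p
          constructor
          · intro h
            have h1 := h.trans (Nat.gcd_dvd_left _ _)
            exact ⟨h1.trans (Nat.gcd_dvd_left _ _), h1.trans (Nat.gcd_dvd_right _ _)⟩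
          · rintro ⟨h1, h2⟩
            exact Nat.dvd_gcd (Nat.dvd_gcd h1 h2) hrn
        simp_rw [this]
        rw [← Finset.sum_filter, Finset.sum_const, nsmul_eq_mul, card_pair_dvd n r hr]
        push_cast
        ring

lemma exists_coprime_lift (c d : ZMod n)
    (h : Nat.gcd (Nat.gcd c.val d.val) n = 1) :
    ∃ a b : ℕ, (a : ZMod n) = c ∧ (b : ZMod n) = d ∧ Nat.Coprime a b := by
  rcases eq_or_ne c.val 0 with h0 | h0
  · refine ⟨n, d.val, ?_, ZMod.natCast_rightInverse d, ?_⟩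
    · rw [ZMod.natCast_self]
      rw [ZMod.val_eq_zero] at h0
      exact h0.symm
    · rw [h0, Nat.gcd_zero_left] at h
      exact (Nat.coprime_comm.1 h)
  · set k := ∏ p ∈ c.val.primeFactors.filter (fun p => ¬ p ∣ d.val), p with hk
    refine ⟨c.val, d.val + n * k, ZMod.natCast_rightInverse c, ?_, ?_⟩
    · push_cast
      rw [ZMod.natCast_self, zero_mul, add_zero]
      exact ZMod.natCast_rightInverse d
    · rw [Nat.Coprime]
      by_contra hg
      obtain ⟨p, hp, hpg⟩ := Nat.exists_prime_and_dvd hg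
      have hpc : p ∣ c.val := hpg.trans (Nat.gcd_dvd_left _ _)
      have hpd' : p ∣ d.val + n * k := hpg.trans (Nat.gcd_dvd_right _ _)
      by_cases hpd : p ∣ d.val
      · have hpn : ¬ p ∣ n := by
          intro hpn
          have : p ∣ Nat.gcd (Nat.gcd c.val d.val) n :=
            Nat.dvd_gcd (Nat.dvd_gcd hpc hpd) hpn
          rw [h] at this
          exact hp.one_lt.ne' (Nat.eq_one_of_dvd_one this)
        have hpnk : p ∣ n * k := by
          have := Nat.dvd_sub hpd' hpd
          simpa using this
        rcases (Nat.Prime.dvd_mul hp).1 hpnk with h' | h'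
        · exact hpn h'
        · obtain ⟨q, hq, hpq⟩ := hp.prime.exists_mem_finset_dvd h'
          rw [Finset.mem_filter, Nat.mem_primeFactors] at hq
          have : p = q := (Nat.prime_dvd_prime_iff_eq hp hq.1.1).1 hpq
          exact hq.2 (this ▸ hpd)
      · have hpk : p ∣ k := by
          apply Finset.dvd_prod_of_mem
          rw [Finset.mem_filter, Nat.mem_primeFactors]
          exact ⟨⟨hp, hpc, h0⟩, hpd⟩
        have : p ∣ d.val := by
          have h2 : p ∣ n * k := Dvd.dvd.mul_left hpk n
          have := Nat.dvd_sub hpd' h2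
          simpa using this
        exact hpd this

lemma redSL_Tmat (x : ℤ) : redSL n (Tmat x) = Tmat ((x : ZMod n)) := by
  apply Subtype.ext
  show (Int.castRingHom (ZMod n)).mapMatrix (Tmat x).1 = (Tmat (x : ZMod n)).1
  ext i j
  fin_cases i <;> fin_cases j <;> simp [redSL_coe, Tmat, RingHom.mapMatrix_apply, Matrix.map_apply]

lemma redSL_surjective : Function.Surjective (redSL n) := by
  intro M
  have hrow := M.2
  rw [Matrix.det_fin_two] at hrow
  have hu : Nat.gcd (Nat.gcd (M.1 1 0).val (M.1 1 1).val) n = 1 :=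
    (uni_iff n _ _).2 ⟨M.1 0 0, M.1 0 1, by linear_combination hrow⟩
  obtain ⟨a, b, ha, hb, hab⟩ := exists_coprime_lift n _ _ hu
  obtain ⟨u, v, huv⟩ := (Nat.isCoprime_iff_coprime.2 hab : IsCoprime (a:ℤ) (b:ℤ))
  have hdet : Matrix.det !![v, -u; (a:ℤ), (b:ℤ)] = 1 := by
    rw [Matrix.det_fin_two_of]; linear_combination huv
  set M₀ : SL2 ℤ := ⟨!![v, -u; (a:ℤ), (b:ℤ)], hdet⟩ with hM₀
  have h0 : M.1 1 0 = (redSL n M₀).1 1 0 := by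
    rw [redSL_coe]
    show _ = ((!![v, -u; (a:ℤ), (b:ℤ)] 1 0 : ℤ) : ZMod n)
    rw [show !![v, -u; (a:ℤ), (b:ℤ)] 1 0 = (a:ℤ) by simp]
    rw [show (((a:ℤ)) : ZMod n) = ((a:ℕ) : ZMod n) by push_cast; ring]
    rw [ha]
  have h1 : M.1 1 1 = (redSL n M₀).1 1 1 := by
    rw [redSL_coe]
    show _ = ((!![v, -u; (a:ℤ), (b:ℤ)] 1 1 : ℤ) : ZMod n)
    rw [show !![v, -u; (a:ℤ), (b:ℤ)] 1 1 = (b:ℤ) by simp]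
    rw [show (((b:ℤ)) : ZMod n) = ((b:ℕ) : ZMod n) by push_cast; ring]
    rw [hb]
  obtain ⟨hN0, hN1⟩ := bottom_row_mul_inv M (redSL n M₀) h0 h1
  set N := M * (redSL n M₀)⁻¹ with hN
  have hNT : N = Tmat (N.1 0 1) := eq_Tmat_of_row N hN0 hN1
  refine ⟨Tmat (((N.1 0 1).val : ℤ)) * M₀, ?_⟩
  rw [_root_.map_mul, redSL_Tmat]
  have : ((((N.1 0 1).val : ℤ)) : ZMod n) = N.1 0 1 := by
    push_cast
    exact ZMod.natCast_rightInverse _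
  rw [this, ← hNT, hN]
  group

end Counting

section GroupTheory
variable (n : ℕ)

/-- the image of `-I` in `SL₂(ℤ/n)`. -/
def wK : SL2 (ZMod n) := redSL n negOneSL

lemma wK_coe : (wK n).1 = (-1 : Matrix (Fin 2) (Fin 2) (ZMod n)) := by
  ext i j
  rw [wK, redSL_coe]
  show (((-1 : Matrix (Fin 2) (Fin 2) ℤ) i j : ℤ) : ZMod n) = _
  simp [Matrix.neg_apply, Matrix.one_apply]

lemma wK_mul_self : wK n * wK n = 1 := by
  apply Subtype.ext
  show (wK n).1 * (wK n).1 = 1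
  rw [wK_coe]
  simp

lemma wK_central (g : SL2 (ZMod n)) : g * wK n = wK n * g := by
  apply Subtype.ext
  show g.1 * (wK n).1 = (wK n).1 * g.1
  rw [wK_coe, mul_neg_one, neg_one_mul]

/-- The subgroup `{(x,y) : x = y or x = -y}` of `SL₂(ℤ/n) × SL₂(ℤ/n)`. -/
def SSub : Subgroup (SL2 (ZMod n) × SL2 (ZMod n)) where
  carrier := {x | x.1 = x.2 ∨ x.1 = wK n * x.2}
  one_mem' := Or.inl rfl
  mul_mem' := by
    rintro ⟨a1, a2⟩ ⟨b1, b2⟩ h1 h2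
    simp only [Set.mem_setOf_eq, Prod.mk_mul_mk] at *
    rcases h1 with h1 | h1 <;> rcases h2 with h2 | h2 <;> rw [h1, h2]
    · exact Or.inl rfl
    · exact Or.inr (by rw [← mul_assoc, wK_central n a2, mul_assoc])
    · exact Or.inr (mul_assoc _ _ _)
    · exact Or.inl (by
        rw [Commute.mul_mul_mul_comm (wK_central n a2), wK_mul_self, one_mul])
  inv_mem' := by
    rintro ⟨a1, a2⟩ h
    simp only [Set.mem_setOf_eq, Prod.inv_mk] at *
    rcases h with h | h <;> rw [h]
    · exact Or.inl rfl
    · exact Or.inr (by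
        rw [_root_.mul_inv_rev, inv_eq_of_mul_eq_one_right (wK_mul_self n), wK_central])

lemma mem_SSub (x : SL2 (ZMod n) × SL2 (ZMod n)) :
    x ∈ SSub n ↔ (x.1 = x.2 ∨ x.1 = wK n * x.2) := Iff.rfl

/-- the reduction on the product. -/
def phiH : (SL2 ℤ × SL2 ℤ) →* (SL2 (ZMod n) × SL2 (ZMod n)) :=
  (redSL n).prodMap (redSL n)

lemma phiH_surjective [NeZero n] : Function.Surjective (phiH n) := by
  have : ⇑(phiH n) = Prod.map (redSL n) (redSL n) := rfl
  rw [this]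
  exact (redSL_surjective n).prodMap (redSL_surjective n)

lemma negOneSL_sq : negOneSL * negOneSL = 1 := by
  apply Subtype.ext
  show (negOneSL.1 : Matrix (Fin 2) (Fin 2) ℤ) * negOneSL.1 = 1
  show (-1 : Matrix (Fin 2) (Fin 2) ℤ) * (-1) = 1
  simp

lemma mem_congSubgroup (x : SL2 ℤ × SL2 ℤ) :
    x ∈ congSubgroup n ↔ redSL n x.1 = redSL n x.2 := Iff.rfl

lemma sup_eq_comap : congSubgroup n ⊔ signSubgroup = (SSub n).comap (phiH n) := by
  apply le_antisymm
  · refine sup_le ?_ ?_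
    · intro x hx
      exact Or.inl ((mem_congSubgroup n x).1 hx)
    · rw [signSubgroup, Subgroup.closure_le]
      rintro x (rfl | rfl)
      · refine Or.inr ?_
        show redSL n negOneSL = wK n * redSL n 1
        rw [_root_.map_one, mul_one, wK]
      · refine Or.inr ?_
        show redSL n 1 = wK n * redSL n negOneSL
        rw [_root_.map_one, ← wK, eq_comm, wK_mul_self]
  · intro x hx
    rcases hx with h | h
    · exact Subgroup.mem_sup_left ((mem_congSubgroup n x).2 h)
    · have hx2 : x = (negOneSL, 1) * (negOneSL * x.1, x.2) := by
        refine Prod.ext ?_ ?_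
        · show x.1 = negOneSL * (negOneSL * x.1)
          rw [← mul_assoc, negOneSL_sq, one_mul]
        · show x.2 = 1 * x.2
          rw [one_mul]
      rw [hx2]
      refine mul_mem (Subgroup.mem_sup_right (Subgroup.subset_closure (Or.inl rfl)))
        (Subgroup.mem_sup_left ?_)
      rw [mem_congSubgroup]
      have h' : redSL n x.1 = wK n * redSL n x.2 := h
      show redSL n (negOneSL * x.1) = redSL n x.2
      rw [_root_.map_mul, ← wK, h', ← mul_assoc, wK_mul_self, one_mul]

lemma index_eq [NeZero n] :
    (Subgroup.map (QuotientGroup.mk' signSubgroup) (congSubgroup n)).index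
      = (SSub n).index := by
  rw [Subgroup.index_map, QuotientGroup.ker_mk']
  have h2 : (QuotientGroup.mk' signSubgroup).range = ⊤ :=
    MonoidHom.range_eq_top.2 (QuotientGroup.mk'_surjective _)
  rw [h2, Subgroup.index_top, mul_one, sup_eq_comap,
    Subgroup.index_comap_of_surjective _ (phiH_surjective n)]

lemma wK_ne_one (h2 : 2 < n) : wK n ≠ 1 := by
  haveI : Fact (2 < n) := ⟨h2⟩
  intro h
  have hc := congrArg (fun M : SL2 (ZMod n) => M.1 0 0) h
  simp only [wK_coe] at hc
  have : (-1 : ZMod n) = 1 := by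
    simpa [Matrix.neg_apply, Matrix.one_apply] using hc
  exact CharP.neg_one_ne_one (ZMod n) n this

lemma wK_one (h2 : n = 2) : wK n = 1 := by
  apply Subtype.ext
  rw [wK_coe]
  show _ = (1 : Matrix (Fin 2) (Fin 2) (ZMod n))
  subst h2
  ext i j
  fin_cases i <;> fin_cases j <;> simp [Matrix.one_apply] <;> decide

lemma card_SSub_of_lt [NeZero n] (h2 : 2 < n) :
    Nat.card (SSub n) = 2 * Nat.card (SL2 (ZMod n)) := by
  have hb : Function.Bijective (fun p : SL2 (ZMod n) × Bool =>
      (⟨(if p.2 then wK n * p.1 else p.1, p.1), by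
        rcases p with ⟨k, b⟩
        rw [mem_SSub]
        cases b
        · exact Or.inl (by simp)
        · exact Or.inr (by simp)⟩ : SSub n)) := by
    constructor
    · rintro ⟨k, b⟩ ⟨k', b'⟩ hpq
      rw [Subtype.mk.injEq, Prod.mk.injEq] at hpq
      obtain ⟨h1, h2'⟩ := hpq
      subst h2'
      cases b <;> cases b' <;> simp_all
      · exact absurd h1 (wK_ne_one n h2)
      · exact absurd h1 (wK_ne_one n h2)
    · rintro ⟨⟨x1, x2⟩, hx⟩
      rw [mem_SSub] at hx
      rcases hx with h | h
      · exact ⟨(x2, false), by apply Subtype.ext; simp; exact h.symm⟩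
      · exact ⟨(x2, true), by apply Subtype.ext; simp; exact h.symm⟩
  rw [← Nat.card_eq_of_bijective _ hb, Nat.card_prod]
  simp [Nat.card_eq_fintype_card, mul_comm]

lemma card_SSub_two [NeZero n] (h2 : n = 2) :
    Nat.card (SSub n) = Nat.card (SL2 (ZMod n)) := by
  have hb : Function.Bijective (fun k : SL2 (ZMod n) =>
      (⟨(k, k), by rw [mem_SSub]; exact Or.inl rfl⟩ : SSub n)) := by
    constructor
    · intro k k' h
      rw [Subtype.mk.injEq, Prod.mk.injEq] at h
      exact h.1
    · rintro ⟨⟨x1, x2⟩, hx⟩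
      rw [mem_SSub, wK_one n h2, one_mul] at hx
      have : x1 = x2 := by tauto
      exact ⟨x2, by apply Subtype.ext; simp [this]⟩
  rw [← Nat.card_eq_of_bijective _ hb]

end GroupTheory

lemma card_SL2_rat (n : ℕ) [NeZero n] :
    ((Nat.card (SL2 (ZMod n)) : ℚ))
      = (n : ℚ) ^ 3 * ∑ r ∈ n.divisors, (moebius r : ℚ) / (r : ℚ) ^ 2 := by
  have hQ1 : (((uniSet n).card : ℕ) : ℚ)
      = ∑ r ∈ n.divisors, (moebius r : ℚ) * ((n / r : ℕ) : ℚ) ^ 2 := by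
    have h := congrArg (fun z : ℤ => (z : ℚ)) (card_uniSet n)
    push_cast at h
    exact h
  have hQ : ((Nat.card (SL2 (ZMod n)) : ℚ))
      = n * ∑ r ∈ n.divisors, (moebius r : ℚ) * ((n / r : ℕ) : ℚ) ^ 2 := by
    rw [card_SL2_eq n, Nat.cast_mul, hQ1]
  rw [hQ, Finset.mul_sum, Finset.mul_sum]
  refine Finset.sum_congr rfl fun r hr => ?_
  obtain ⟨hrd, hd0⟩ := Nat.mem_divisors.1 hr
  have hrne : r ≠ 0 := by
    rintro rfl
    exact hd0 (zero_dvd_iff.1 hrd)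
  have hr0 : (r : ℚ) ≠ 0 := Nat.cast_ne_zero.2 hrne
  rw [Nat.cast_div hrd hr0]
  field_simp

/-- Let `d ≥ 2`, let `G = SL₂(ℤ) × SL₂(ℤ)`, `H ≤ G` the subgroup of pairs congruent mod `d`,
`Z ≤ G` the subgroup generated by `(-I, I)` and `(I, -I)`, and `H̄` the image of `H` in `G/Z`.
Then `[G/Z : H̄] = 6` if `d = 2`, and `[G/Z : H̄] = (1/2)·d³·∑_{r ∣ d} μ(r)/r²` if `d > 2`. -/
theorem index_image_congSubgroup (d : ℕ) (hd : 2 ≤ d) :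
    ((Subgroup.map (QuotientGroup.mk' signSubgroup) (congSubgroup d)).index : ℚ)
      = if d = 2 then 6
        else (1 / 2 : ℚ) * (d : ℚ) ^ 3 *
            ∑ r ∈ d.divisors, (ArithmeticFunction.moebius r : ℚ) / (r : ℚ) ^ 2 := by
  haveI : NeZero d := ⟨by omega⟩
  have hκpos : 0 < Nat.card (SL2 (ZMod d)) := Nat.card_pos
  have hidx := index_eq d
  have hmul := Subgroup.index_mul_card (SSub d)
  rw [Nat.card_prod] at hmul
  rcases eq_or_ne d 2 with h2 | h2
  · rw [if_pos h2]
    rw [card_SSub_two d h2] at hmul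
    have hI : (SSub d).index = Nat.card (SL2 (ZMod d)) :=
      Nat.eq_of_mul_eq_mul_right hκpos hmul
    rw [hidx, hI, card_SL2_rat d, h2]
    rw [show Nat.divisors 2 = {1, 2} from Nat.Prime.divisors Nat.prime_two]
    rw [Finset.sum_pair (by norm_num)]
    rw [ArithmeticFunction.moebius_apply_one,
      ArithmeticFunction.moebius_apply_prime Nat.prime_two]
    norm_num
  · rw [if_neg h2]
    have h2' : 2 < d := lt_of_le_of_ne hd (Ne.symm h2)
    rw [card_SSub_of_lt d h2'] at hmul
    have hNat : (SSub d).index * 2 = Nat.card (SL2 (ZMod d)) := by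
      apply Nat.eq_of_mul_eq_mul_right hκpos
      rw [mul_assoc]
      exact hmul
    have hI : ((SSub d).index : ℚ) = (Nat.card (SL2 (ZMod d)) : ℚ) / 2 := by
      have h' : ((SSub d).index : ℚ) * 2 = (Nat.card (SL2 (ZMod d)) : ℚ) := by
        exact_mod_cast hNat
      linarith
    rw [hidx, hI, card_SL2_rat d]
    ring
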